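/- A prime p can be written as p = a² + 5b² with integers a, b if and only if p = 5 or p ≡ 1 (mod 20) or p ≡ 9 (mod 20). -/

import Mathlib

-- square residue helpers
lemma sq_mod8 (x : ℤ) : x^2 % 8 = 0 ∨ x^2 % 8 = 1 ∨ x^2 % 8 = 4 := by
  have h : x % 8 = 0 ∨ x % 8 = 1 ∨ x % 8 = 2 ∨ x % 8 = 3 ∨ x % 8 = 4 ∨ x % 8 = 5 ∨
      x % 8 = 6 ∨ x % 8 = 7 := by omega
  rw [pow_two, Int.mul_emod]
  rcases h with h | h | h | h | h | h | h | h <;> rw [h] <;> decide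

lemma sq_mod5 (x : ℤ) : x^2 % 5 = 0 ∨ x^2 % 5 = 1 ∨ x^2 % 5 = 4 := by
  have h : x % 5 = 0 ∨ x % 5 = 1 ∨ x % 5 = 2 ∨ x % 5 = 3 ∨ x % 5 = 4 := by omega
  rw [pow_two, Int.mul_emod]
  rcases h with h | h | h | h | h <;> rw [h] <;> decide

lemma dvd5_of_sq (x : ℤ) (h : x^2 % 5 = 0) : x % 5 = 0 := by
  have h' : x % 5 = 0 ∨ x % 5 = 1 ∨ x % 5 = 2 ∨ x % 5 = 3 ∨ x % 5 = 4 := by omega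
  rw [pow_two, Int.mul_emod] at h
  rcases h' with h' | h' | h' | h' | h' <;> rw [h'] at h <;> simp_all

lemma thue5 (p : ℕ) (hp : p.Prime) (z : ℤ) :
    ∃ x y : ℤ, (((x - z * y : ℤ) : ZMod p) = 0) ∧ x ^ 2 < (p : ℤ) ∧ y ^ 2 < (p : ℤ) ∧
      (x ≠ 0 ∨ y ≠ 0) := by
  haveI : Fact p.Prime := ⟨hp⟩
  set m := Nat.sqrt p with hm
  have hmp : m * m ≤ p := by have := Nat.sqrt_le' p; nlinarith
  have hmne : m * m ≠ p := fun h => Prime.not_isSquare hp.prime ⟨m, h.symm⟩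
  have hcard : (Finset.univ : Finset (ZMod p)).card <
      ((Finset.range (m + 1)) ×ˢ (Finset.range (m + 1))).card := by
    rw [Finset.card_product, Finset.card_range, Finset.card_univ, ZMod.card]
    have := Nat.lt_succ_sqrt p
    nlinarith
  obtain ⟨a, ha, b, hb, hne, hfe⟩ :=
    Finset.exists_ne_map_eq_of_card_lt_of_maps_to hcard
      (fun q _ => Finset.mem_univ (((q.1 : ZMod p) - z * q.2)))
  simp only [Finset.mem_product, Finset.mem_range] at ha hb
  refine ⟨(a.1 : ℤ) - b.1, (a.2 : ℤ) - b.2, ?_, ?_, ?_, ?_⟩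
  · push_cast
    linear_combination hfe
  · have h1 : a.1 ≤ m := by omega
    have h2 : b.1 ≤ m := by omega
    have h1' : (a.1 : ℤ) ≤ m := by exact_mod_cast h1
    have h2' : (b.1 : ℤ) ≤ m := by exact_mod_cast h2
    have hmp' : (m : ℤ) * m < p := by exact_mod_cast lt_of_le_of_ne hmp hmne
    have ha0 : (0 : ℤ) ≤ a.1 := Int.natCast_nonneg _
    have hb0 : (0 : ℤ) ≤ b.1 := Int.natCast_nonneg _
    nlinarith
  · have h1 : a.2 ≤ m := by omega
    have h2 : b.2 ≤ m := by omega
    have h1' : (a.2 : ℤ) ≤ m := by exact_mod_cast h1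
    have h2' : (b.2 : ℤ) ≤ m := by exact_mod_cast h2
    have hmp' : (m : ℤ) * m < p := by exact_mod_cast lt_of_le_of_ne hmp hmne
    have ha0 : (0 : ℤ) ≤ a.2 := Int.natCast_nonneg _
    have hb0 : (0 : ℤ) ≤ b.2 := Int.natCast_nonneg _
    nlinarith
  · by_contra h
    push_neg at h
    exact hne (Prod.ext (by omega) (by omega))

lemma sq_mod20 (x : ℤ) : x ^ 2 % 20 = 0 ∨ x ^ 2 % 20 = 1 ∨ x ^ 2 % 20 = 4 ∨
    x ^ 2 % 20 = 5 ∨ x ^ 2 % 20 = 9 ∨ x ^ 2 % 20 = 16 := by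
  have h2 : x ^ 2 % 20 = (x % 20) * (x % 20) % 20 := by rw [pow_two, Int.mul_emod]
  have h : x % 20 = 0 ∨ x % 20 = 1 ∨ x % 20 = 2 ∨ x % 20 = 3 ∨ x % 20 = 4 ∨ x % 20 = 5 ∨
      x % 20 = 6 ∨ x % 20 = 7 ∨ x % 20 = 8 ∨ x % 20 = 9 ∨ x % 20 = 10 ∨ x % 20 = 11 ∨
      x % 20 = 12 ∨ x % 20 = 13 ∨ x % 20 = 14 ∨ x % 20 = 15 ∨ x % 20 = 16 ∨ x % 20 = 17 ∨
      x % 20 = 18 ∨ x % 20 = 19 := by omega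
  rcases h with h|h|h|h|h|h|h|h|h|h|h|h|h|h|h|h|h|h|h|h <;> rw [h] at h2 <;> norm_num at h2 <;>
    omega

lemma sq_mod8' (x : ℤ) : (x % 2 = 0 ∧ (x ^ 2 % 8 = 0 ∨ x ^ 2 % 8 = 4)) ∨
    (x % 2 = 1 ∧ x ^ 2 % 8 = 1) := by
  have h2 : x ^ 2 % 8 = (x % 8) * (x % 8) % 8 := by rw [pow_two, Int.mul_emod]
  have h : x % 8 = 0 ∨ x % 8 = 1 ∨ x % 8 = 2 ∨ x % 8 = 3 ∨ x % 8 = 4 ∨ x % 8 = 5 ∨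
      x % 8 = 6 ∨ x % 8 = 7 := by omega
  rcases h with h|h|h|h|h|h|h|h <;> rw [h] at h2 <;> norm_num at h2 <;> omega

lemma sq_mod5' (x : ℤ) : (x % 5 = 0 ∧ x ^ 2 % 5 = 0) ∨ (x % 5 ≠ 0 ∧ (x ^ 2 % 5 = 1 ∨ x ^ 2 % 5 = 4)) := by
  have h2 : x ^ 2 % 5 = (x % 5) * (x % 5) % 5 := by rw [pow_two, Int.mul_emod]
  have h : x % 5 = 0 ∨ x % 5 = 1 ∨ x % 5 = 2 ∨ x % 5 = 3 ∨ x % 5 = 4 := by omega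
  rcases h with h|h|h|h|h <;> rw [h] at h2 <;> norm_num at h2 <;> omega

theorem stmt_4 (p : ℕ) (hp : p.Prime) :
    (∃ a b : ℤ, (p : ℤ) = a ^ 2 + 5 * b ^ 2) ↔
    (p = 5 ∨ p % 20 = 1 ∨ p % 20 = 9) := by
  constructor
  · rintro ⟨a, b, hab⟩
    have ha := sq_mod20 a
    have hb := sq_mod20 b
    have h2 : p % 2 = 0 → p = 2 := fun h =>
      ((Nat.prime_dvd_prime_iff_eq Nat.prime_two hp).mp (Nat.dvd_of_mod_eq_zero h)).symm
    have h5 : p % 5 = 0 → p = 5 := fun h =>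
      ((Nat.prime_dvd_prime_iff_eq (by norm_num) hp).mp (Nat.dvd_of_mod_eq_zero h)).symm
    have hset : p % 20 = 0 ∨ p % 20 = 1 ∨ p % 20 = 4 ∨ p % 20 = 5 ∨ p % 20 = 6 ∨
        p % 20 = 9 ∨ p % 20 = 10 ∨ p % 20 = 14 ∨ p % 20 = 16 := by omega
    rcases hset with h|h|h|h|h|h|h|h|h
    · have := h2 (by omega); omega
    · omega
    · have := h2 (by omega); omega
    · have := h5 (by omega); omega
    · have := h2 (by omega); omega
    · omega
    · have := h2 (by omega); omega
    · have := h2 (by omega); omega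
    · have := h2 (by omega); omega
  · rintro (h | h20)
    · exact ⟨0, 1, by norm_num [h]⟩
    · haveI : Fact p.Prime := ⟨hp⟩
      have hp4 : p % 4 = 1 := by omega
      have hp5 : p % 5 = 1 ∨ p % 5 = 4 := by omega
      have h1 : IsSquare (-1 : ZMod p) := ZMod.exists_sq_eq_neg_one_iff.mpr (by omega)
      have h5sq : IsSquare (5 : ZMod p) := by
        haveI : Fact (Nat.Prime 5) := ⟨by norm_num⟩
        have h5 : ((5 : ℕ) : ZMod p) = (5 : ZMod p) := by push_cast; ring
        rw [← h5, ZMod.exists_sq_eq_prime_iff_of_mod_four_eq_one hp4 (by norm_num)]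
        have hmod : ((p : ℕ) : ZMod 5) = ((p % 5 : ℕ) : ZMod 5) := (ZMod.natCast_mod p 5).symm
        rcases hp5 with h | h <;> rw [hmod, h]
        · exact ⟨1, by norm_num⟩
        · exact ⟨2, by norm_num⟩
      have hneg5 : IsSquare (-5 : ZMod p) := by
        have := h1.mul h5sq
        rwa [show (-1 : ZMod p) * 5 = -5 by ring] at this
      obtain ⟨c, hc⟩ := hneg5
      set z : ℤ := (c.val : ℤ) with hzdef
      have hz : ((z ^ 2 + 5 : ℤ) : ZMod p) = 0 := by
        push_cast [hzdef]
        rw [ZMod.natCast_val, ZMod.cast_id]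
        rw [pow_two, ← hc]
        ring
      obtain ⟨x, y, hxy, hx, hy, hne⟩ := thue5 p hp z
      have hdvd : (p : ℤ) ∣ x ^ 2 + 5 * y ^ 2 := by
        rw [← ZMod.intCast_zmod_eq_zero_iff_dvd]
        have h1 : (x : ZMod p) = (z : ZMod p) * y := by
          have := hxy; push_cast at this; linear_combination this
        push_cast
        rw [h1]
        have h2 : ((z : ZMod p)) ^ 2 + 5 = 0 := by
          have := hz; push_cast at this; linear_combination this
        linear_combination ((y : ZMod p)) ^ 2 * h2
      obtain ⟨k, hk⟩ := hdvd
      have hppos : (0 : ℤ) < p := by exact_mod_cast hp.pos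
      have hpos : 0 < x ^ 2 + 5 * y ^ 2 := by
        rcases hne with h | h
        · nlinarith [sq_nonneg y, (sq_nonneg x).lt_of_ne (Ne.symm (pow_ne_zero 2 h))]
        · nlinarith [sq_nonneg x, (sq_nonneg y).lt_of_ne (Ne.symm (pow_ne_zero 2 h))]
      have hk1 : 1 ≤ k := by nlinarith
      have hk5 : k ≤ 5 := by nlinarith
      have hkcases : k = 1 ∨ k = 2 ∨ k = 3 ∨ k = 4 ∨ k = 5 := by omega
      rcases hkcases with hkc | hkc | hkc | hkc | hkc <;> rw [hkc] at hk
      · exact ⟨x, y, by linarith⟩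
      · exfalso
        have hx8 := sq_mod8' x
        have hy8 := sq_mod8' y
        omega
      · exfalso
        have hx5 := sq_mod5' x
        omega
      · have hx8 := sq_mod8' x
        have hy8 := sq_mod8' y
        have hxe : x % 2 = 0 ∧ y % 2 = 0 := by omega
        have hx2 : x = 2 * (x / 2) := by omega
        have hy2 : y = 2 * (y / 2) := by omega
        refine ⟨x / 2, y / 2, ?_⟩
        rw [hx2, hy2] at hk
        ring_nf at hk ⊢
        linarith
      · have hx5 : x % 5 = 0 := by
          have := sq_mod5' x
          omega
        have hx5' : x = 5 * (x / 5) := by omega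
        refine ⟨y, x / 5, ?_⟩
        rw [hx5'] at hk
        ring_nf at hk ⊢
        linarith
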